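/- Let f be a classical solution of the Fokker–Planck equation ∂_t f + ∇·(F f) = (1/2)∇·(σ²∇f) on Q = Ω × (0,T_f) satisfying the no-flux boundary condition H·n̂ = 0 on ∂Ω × (0,T_f), and assume the drift bound |F(x,t)| ≤ N on Ω × (0,T_f). Then the squared L² norm of f satisfies the differential inequality (d/dt) ‖f(·,t)‖²_{L²(Ω)} ≤ ‖σ⁻¹‖₂² N² ‖f(·,t)‖²_{L²(Ω)} for all t ∈ (0,T_f), where ‖σ⁻¹‖₂ = max_j σ_j⁻¹. -/

import Mathlib

open MeasureTheory Set Filter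

noncomputable section

abbrev E4 := EuclideanSpace ℝ (Fin 4)

/-- Spatial partial derivative in the `j`-th coordinate direction. -/
def pd (j : Fin 4) (g : E4 → ℝ) (x : E4) : ℝ :=
  fderiv ℝ g x (EuclideanSpace.single j 1)

/-- The open axis-aligned box `Ω = ∏ (a i, b i) ⊂ ℝ⁴`. -/
def box (a b : Fin 4 → ℝ) : Set E4 := {x | ∀ i, x i ∈ Set.Ioo (a i) (b i)}

/-- `f` is twice continuously differentiable in `x` and once in `t` on `S × I`. -/
structure RegSol (f : E4 → ℝ → ℝ) (S : Set E4) (I : Set ℝ) : Prop where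
  contF : ContinuousOn (fun p : E4 × ℝ => f p.1 p.2) (S ×ˢ I)
  diffX : ∀ t ∈ I, ∀ x ∈ S, DifferentiableAt ℝ (fun y => f y t) x
  contDX : ∀ j : Fin 4, ContinuousOn (fun p : E4 × ℝ => pd j (fun y => f y p.2) p.1) (S ×ˢ I)
  diffDX : ∀ j : Fin 4, ∀ t ∈ I, ∀ x ∈ S, DifferentiableAt ℝ (pd j (fun y => f y t)) x
  contDDX : ∀ j : Fin 4, ContinuousOn (fun p : E4 × ℝ => pd j (pd j (fun y => f y p.2)) p.1) (S ×ˢ I)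
  diffT : ∀ x ∈ S, ∀ t ∈ I, DifferentiableAt ℝ (fun s => f x s) t
  contDT : ContinuousOn (fun p : E4 × ℝ => deriv (fun s => f p.1 s) p.2) (S ×ˢ I)

/-- `F` is continuous on `S × I` and continuously differentiable in `x`. -/
structure RegDrift (F : E4 → ℝ → E4) (S : Set E4) (I : Set ℝ) : Prop where
  cont : ContinuousOn (fun p : E4 × ℝ => F p.1 p.2) (S ×ˢ I)
  diffX : ∀ t ∈ I, ∀ x ∈ S, DifferentiableAt ℝ (fun y => F y t) x
  contDX : ∀ t ∈ I, ContinuousOn (fun x => fderiv ℝ (fun y => F y t) x) S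

/-- The Fokker–Planck equation `∂ₜ f + ∇·(F f) = (1/2) ∇·(σ² ∇ f)` at the point `(x, t)`. -/
def FPEq (F : E4 → ℝ → E4) (σ : Fin 4 → ℝ) (f : E4 → ℝ → ℝ) (x : E4) (t : ℝ) : Prop :=
  deriv (fun s => f x s) t + ∑ j : Fin 4, pd j (fun y => F y t j * f y t) x
    = (1 / 2) * ∑ j : Fin 4, (σ j) ^ 2 * pd j (pd j (fun y => f y t)) x

/-- The `j`-th component of the flux `H_j = (σ_j²/2) ∂_{x_j} f − F_j f`. -/
def flux (F : E4 → ℝ → E4) (σ : Fin 4 → ℝ) (f : E4 → ℝ → ℝ) (j : Fin 4) (x : E4) (t : ℝ) : ℝ :=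
  (σ j) ^ 2 / 2 * pd j (fun y => f y t) x - F x t j * f x t

/-- The no-flux boundary condition `H·n̂ = 0` on `∂Ω × (0, T_f)`: on the face of the box where
the `j`-th coordinate is extremal, the outward normal is `∓ e_j`, so `H·n̂ = 0` reads `H_j = 0`. -/
def NoFlux (a b : Fin 4 → ℝ) (Tf : ℝ) (F : E4 → ℝ → E4) (σ : Fin 4 → ℝ)
    (f : E4 → ℝ → ℝ) : Prop :=
  ∀ t ∈ Set.Ioo 0 Tf, ∀ j : Fin 4, ∀ x ∈ closure (box a b),
    (x j = a j ∨ x j = b j) → flux F σ f j x t = 0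


section Aux

abbrev eqE : E4 ≃L[ℝ] (Fin 4 → ℝ) := EuclideanSpace.equiv (Fin 4) ℝ

variable (a b : Fin 4 → ℝ)

lemma box_eq : box a b = ⇑eqE ⁻¹' (univ.pi fun i => Ioo (a i) (b i)) := by
  ext x; simp [box, Set.mem_pi]

lemma isOpen_box : IsOpen (box a b) := by
  rw [box_eq]
  exact (isOpen_set_pi finite_univ (fun i _ => isOpen_Ioo)).preimage eqE.continuous

lemma preimage_closure' (s : Set (Fin 4 → ℝ)) :
    closure (⇑eqE ⁻¹' s) = ⇑eqE ⁻¹' closure s := by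
  have := eqE.toHomeomorph.preimage_closure s
  exact this.symm

lemma closure_box_eq (hab : ∀ i, a i < b i) :
    closure (box a b) = ⇑eqE ⁻¹' (Icc a b) := by
  rw [box_eq, preimage_closure', ← Set.pi_univ_Icc]
  rw [closure_pi_set]
  exact congrArg (⇑eqE ⁻¹' ·) (Set.pi_congr rfl fun i _ => closure_Ioo (hab i).ne)

lemma mem_closure_box (hab : ∀ i, a i < b i) (x : E4) :
    x ∈ closure (box a b) ↔ ∀ i, x i ∈ Icc (a i) (b i) := by
  rw [closure_box_eq a b hab]
  simp only [Set.mem_preimage, Set.mem_Icc, Pi.le_def, ← forall_and]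
  rfl

lemma isCompact_closure_box : IsCompact (closure (box a b)) := by
  have h : closure (box a b) ⊆ ⇑eqE ⁻¹' (Icc a b) := by
    apply closure_minimal
    · rw [box_eq]; exact preimage_mono (by rw [← Set.pi_univ_Icc]; exact Set.pi_mono fun i _ => Ioo_subset_Icc_self)
    · exact (isClosed_Icc).preimage eqE.continuous
  have heq : ⇑eqE ⁻¹' (Icc a b) = eqE.symm '' (Icc a b) := by
    exact (eqE.image_symm_eq_preimage _).symm
  exact (isCompact_Icc.image eqE.symm.continuous).of_isClosed_subset isClosed_closure (heq ▸ h)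

lemma volume_closure_box_lt_top : volume (closure (box a b)) < ⊤ :=
  (isCompact_closure_box a b).measure_lt_top

lemma setIntegral_box_transfer (g : E4 → ℝ) :
    ∫ x in box a b, g x = ∫ y in (univ.pi fun i => Ioo (a i) (b i)), g (eqE.symm y) := by
  have vp := EuclideanSpace.volume_preserving_symm_measurableEquiv_toLp (Fin 4)
  have emb : MeasurableEmbedding (⇑(MeasurableEquiv.toLp 2 (Fin 4 → ℝ)).symm) :=
    (MeasurableEquiv.toLp 2 (Fin 4 → ℝ)).symm.measurableEmbedding
  have h := vp.setIntegral_preimage_emb emb (fun y => g (eqE.symm y)) (univ.pi fun i => Ioo (a i) (b i))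
  rw [box_eq]
  exact h

end Aux

section PD

lemma pd_mul (j : Fin 4) (g h : E4 → ℝ) (x : E4)
    (hg : DifferentiableAt ℝ g x) (hh : DifferentiableAt ℝ h x) :
    pd j (fun y => g y * h y) x = pd j g x * h x + g x * pd j h x := by
  unfold pd
  rw [fderiv_fun_mul hg hh]
  simp only [ContinuousLinearMap.add_apply, ContinuousLinearMap.smul_apply, smul_eq_mul]
  ring

lemma pd_sub (j : Fin 4) (g h : E4 → ℝ) (x : E4)
    (hg : DifferentiableAt ℝ g x) (hh : DifferentiableAt ℝ h x) :
    pd j (fun y => g y - h y) x = pd j g x - pd j h x := by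
  unfold pd
  rw [fderiv_fun_sub hg hh]
  simp

lemma pd_const_mul (j : Fin 4) (c : ℝ) (g : E4 → ℝ) (x : E4)
    (hg : DifferentiableAt ℝ g x) :
    pd j (fun y => c * g y) x = c * pd j g x := by
  unfold pd
  rw [fderiv_const_mul hg c]
  simp

end PD

section Reg

variable {a b : Fin 4 → ℝ} {Tf : ℝ} {σ : Fin 4 → ℝ}
  {F : E4 → ℝ → E4} {f : E4 → ℝ → ℝ}

/-- slice of a jointly continuous function -/
lemma sliceCont {S : Set E4} {I : Set ℝ} {g : E4 × ℝ → ℝ} (hg : ContinuousOn g (S ×ˢ I))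
    {t : ℝ} (ht : t ∈ I) : ContinuousOn (fun x => g (x, t)) S :=
  hg.comp (Continuous.continuousOn (by fun_prop)) (fun x hx => ⟨hx, ht⟩)

lemma sliceContE {S : Set E4} {I : Set ℝ} {g : E4 × ℝ → E4} (hg : ContinuousOn g (S ×ˢ I))
    {t : ℝ} (ht : t ∈ I) : ContinuousOn (fun x => g (x, t)) S :=
  hg.comp (Continuous.continuousOn (by fun_prop)) (fun x hx => ⟨hx, ht⟩)

-- differentiability of coordinate functions of F
lemma diffFj (hF : RegDrift F (closure (box a b)) (Set.Icc 0 Tf)) {t : ℝ} (ht : t ∈ Icc 0 Tf) {x : E4} (hx : x ∈ closure (box a b)) (j : Fin 4) :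
    DifferentiableAt ℝ (fun y => F y t j) x :=
  (EuclideanSpace.proj j (𝕜 := ℝ)).differentiableAt.comp x (hF.diffX t ht x hx)

-- formula for pd of F-coordinates
lemma pd_Fj_eq (hF : RegDrift F (closure (box a b)) (Set.Icc 0 Tf)) {t : ℝ} (ht : t ∈ Icc 0 Tf) {x : E4} (hx : x ∈ closure (box a b)) (j k : Fin 4) :
    pd j (fun y => F y t k) x
      = (EuclideanSpace.proj k (𝕜 := ℝ)) (fderiv ℝ (fun y => F y t) x (EuclideanSpace.single j 1)) := by
  unfold pd
  have : fderiv ℝ (fun y => F y t k) x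
      = (EuclideanSpace.proj k (𝕜 := ℝ)).comp (fderiv ℝ (fun y => F y t) x) := by
    have hi := (hF.diffX t ht x hx).hasFDerivAt
    have h1 := ((EuclideanSpace.proj k (𝕜 := ℝ)).hasFDerivAt).comp x hi
    exact h1.fderiv
  rw [this]; rfl

-- continuity of x ↦ pd j (F · t k) on S
lemma contOn_pd_Fj (hF : RegDrift F (closure (box a b)) (Set.Icc 0 Tf)) {t : ℝ} (ht : t ∈ Icc 0 Tf) (j k : Fin 4) :
    ContinuousOn (fun x => pd j (fun y => F y t k) x) (closure (box a b)) := by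
  have h1 : ContinuousOn (fun x => (EuclideanSpace.proj k (𝕜 := ℝ))
      (fderiv ℝ (fun y => F y t) x (EuclideanSpace.single j 1))) (closure (box a b)) := by
    apply (EuclideanSpace.proj k (𝕜 := ℝ)).continuous.comp_continuousOn
    exact (ContinuousLinearMap.apply ℝ E4 (EuclideanSpace.single j 1)).continuous.comp_continuousOn
      (hF.contDX t ht)
  exact h1.congr (fun x hx => pd_Fj_eq hF ht hx j k)

end Reg

section Flux

variable {a b : Fin 4 → ℝ} {Tf : ℝ} {σ : Fin 4 → ℝ}
  {F : E4 → ℝ → E4} {f : E4 → ℝ → ℝ}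

-- notation: S = closure (box a b)

lemma contOn_u (hreg : RegSol f (closure (box a b)) (Set.Icc 0 Tf)) {t : ℝ} (ht : t ∈ Icc 0 Tf) :
    ContinuousOn (fun x => f x t) (closure (box a b)) := sliceCont hreg.contF ht

lemma contOn_pdu (hreg : RegSol f (closure (box a b)) (Set.Icc 0 Tf)) {t : ℝ} (ht : t ∈ Icc 0 Tf)
    (j : Fin 4) : ContinuousOn (fun x => pd j (fun y => f y t) x) (closure (box a b)) :=
  sliceCont (hreg.contDX j) ht

lemma contOn_pdpdu (hreg : RegSol f (closure (box a b)) (Set.Icc 0 Tf)) {t : ℝ} (ht : t ∈ Icc 0 Tf)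
    (j : Fin 4) : ContinuousOn (fun x => pd j (pd j (fun y => f y t)) x) (closure (box a b)) :=
  sliceCont (hreg.contDDX j) ht

lemma contOn_Fj (hF : RegDrift F (closure (box a b)) (Set.Icc 0 Tf)) {t : ℝ} (ht : t ∈ Icc 0 Tf)
    (j : Fin 4) : ContinuousOn (fun x => F x t j) (closure (box a b)) :=
  (EuclideanSpace.proj j (𝕜 := ℝ)).continuous.comp_continuousOn (sliceContE hF.cont ht)

lemma diff_flux (hF : RegDrift F (closure (box a b)) (Set.Icc 0 Tf))
    (hreg : RegSol f (closure (box a b)) (Set.Icc 0 Tf)) {t : ℝ} (ht : t ∈ Icc 0 Tf)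
    {x : E4} (hx : x ∈ closure (box a b)) (j : Fin 4) :
    DifferentiableAt ℝ (fun y => flux F σ f j y t) x := by
  unfold flux
  exact ((hreg.diffDX j t ht x hx).const_mul _).sub
    ((diffFj hF ht hx j).mul (hreg.diffX t ht x hx))

lemma pd_flux_eq (hF : RegDrift F (closure (box a b)) (Set.Icc 0 Tf))
    (hreg : RegSol f (closure (box a b)) (Set.Icc 0 Tf)) {t : ℝ} (ht : t ∈ Icc 0 Tf)
    {x : E4} (hx : x ∈ closure (box a b)) (j : Fin 4) :
    pd j (fun y => flux F σ f j y t) x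
      = (σ j) ^ 2 / 2 * pd j (pd j (fun y => f y t)) x
        - pd j (fun y => F y t j * f y t) x := by
  unfold flux
  rw [pd_sub j (fun y => σ j ^ 2 / 2 * pd j (fun y => f y t) y) (fun y => F y t j * f y t) x ((hreg.diffDX j t ht x hx).const_mul _)
      ((diffFj hF ht hx j).mul (hreg.diffX t ht x hx)),
    pd_const_mul j _ _ x (hreg.diffDX j t ht x hx)]

lemma pd_Fj_mul_u_eq (hF : RegDrift F (closure (box a b)) (Set.Icc 0 Tf))
    (hreg : RegSol f (closure (box a b)) (Set.Icc 0 Tf)) {t : ℝ} (ht : t ∈ Icc 0 Tf)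
    {x : E4} (hx : x ∈ closure (box a b)) (j : Fin 4) :
    pd j (fun y => F y t j * f y t) x
      = pd j (fun y => F y t j) x * f x t + F x t j * pd j (fun y => f y t) x :=
  pd_mul j _ _ x (diffFj hF ht hx j) (hreg.diffX t ht x hx)

lemma contOn_flux (hF : RegDrift F (closure (box a b)) (Set.Icc 0 Tf))
    (hreg : RegSol f (closure (box a b)) (Set.Icc 0 Tf)) {t : ℝ} (ht : t ∈ Icc 0 Tf)
    (j : Fin 4) : ContinuousOn (fun x => flux F σ f j x t) (closure (box a b)) := by
  unfold flux
  exact (continuousOn_const.mul (contOn_pdu hreg ht j)).sub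
    ((contOn_Fj hF ht j).mul (contOn_u hreg ht))

lemma contOn_pd_flux (hF : RegDrift F (closure (box a b)) (Set.Icc 0 Tf))
    (hreg : RegSol f (closure (box a b)) (Set.Icc 0 Tf)) {t : ℝ} (ht : t ∈ Icc 0 Tf)
    (j : Fin 4) :
    ContinuousOn (fun x => pd j (fun y => flux F σ f j y t) x) (closure (box a b)) := by
  have hform : ContinuousOn (fun x =>
      (σ j) ^ 2 / 2 * pd j (pd j (fun y => f y t)) x
        - (pd j (fun y => F y t j) x * f x t + F x t j * pd j (fun y => f y t) x))
      (closure (box a b)) :=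
    (continuousOn_const.mul (contOn_pdpdu hreg ht j)).sub
      (((contOn_pd_Fj hF ht j j).mul (contOn_u hreg ht)).add
        ((contOn_Fj hF ht j).mul (contOn_pdu hreg ht j)))
  refine hform.congr fun x hx => ?_
  rw [pd_flux_eq hF hreg ht hx j, pd_Fj_mul_u_eq hF hreg ht hx j]

lemma diff_G (hF : RegDrift F (closure (box a b)) (Set.Icc 0 Tf))
    (hreg : RegSol f (closure (box a b)) (Set.Icc 0 Tf)) {t : ℝ} (ht : t ∈ Icc 0 Tf)
    {x : E4} (hx : x ∈ closure (box a b)) (j : Fin 4) :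
    DifferentiableAt ℝ (fun y => f y t * flux F σ f j y t) x :=
  (hreg.diffX t ht x hx).mul (diff_flux hF hreg ht hx j)

lemma pd_G_eq (hF : RegDrift F (closure (box a b)) (Set.Icc 0 Tf))
    (hreg : RegSol f (closure (box a b)) (Set.Icc 0 Tf)) {t : ℝ} (ht : t ∈ Icc 0 Tf)
    {x : E4} (hx : x ∈ closure (box a b)) (j : Fin 4) :
    pd j (fun y => f y t * flux F σ f j y t) x
      = pd j (fun y => f y t) x * flux F σ f j x t
        + f x t * pd j (fun y => flux F σ f j y t) x :=
  pd_mul j _ _ x (hreg.diffX t ht x hx) (diff_flux hF hreg ht hx j)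

lemma contOn_pd_G (hF : RegDrift F (closure (box a b)) (Set.Icc 0 Tf))
    (hreg : RegSol f (closure (box a b)) (Set.Icc 0 Tf)) {t : ℝ} (ht : t ∈ Icc 0 Tf)
    (j : Fin 4) :
    ContinuousOn (fun x => pd j (fun y => f y t * flux F σ f j y t) x) (closure (box a b)) := by
  have hform : ContinuousOn (fun x =>
      pd j (fun y => f y t) x * flux F σ f j x t
        + f x t * pd j (fun y => flux F σ f j y t) x) (closure (box a b)) :=
    ((contOn_pdu hreg ht j).mul (contOn_flux hF hreg ht j)).add
      ((contOn_u hreg ht).mul (contOn_pd_flux hF hreg ht j))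
  exact hform.congr fun x hx => pd_G_eq hF hreg ht hx j

lemma contOn_div_G (hF : RegDrift F (closure (box a b)) (Set.Icc 0 Tf))
    (hreg : RegSol f (closure (box a b)) (Set.Icc 0 Tf)) {t : ℝ} (ht : t ∈ Icc 0 Tf) :
    ContinuousOn (fun x => ∑ j : Fin 4, pd j (fun y => f y t * flux F σ f j y t) x)
      (closure (box a b)) := by
  apply continuousOn_finset_sum
  intro j _
  exact contOn_pd_G hF hreg ht j

end Flux

section Div

variable {a b : Fin 4 → ℝ} {Tf : ℝ} {σ : Fin 4 → ℝ}
  {F : E4 → ℝ → E4} {f : E4 → ℝ → ℝ}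

lemma mem_S_of_Icc (hab : ∀ i, a i < b i) {y : Fin 4 → ℝ} (hy : y ∈ Icc a b) :
    eqE.symm y ∈ closure (box a b) := by
  rw [closure_box_eq a b hab, Set.mem_preimage, eqE.apply_symm_apply]
  exact hy

lemma mem_box_of_pi {y : Fin 4 → ℝ} (hy : y ∈ univ.pi fun i => Ioo (a i) (b i)) :
    eqE.symm y ∈ box a b := by
  rw [box_eq, Set.mem_preimage, eqE.apply_symm_apply]
  exact hy

lemma integral_div_G (hab : ∀ i, a i < b i)
    (hF : RegDrift F (closure (box a b)) (Set.Icc 0 Tf))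
    (hreg : RegSol f (closure (box a b)) (Set.Icc 0 Tf))
    (hBC : NoFlux a b Tf F σ f) {t : ℝ} (ht : t ∈ Ioo 0 Tf) :
    ∫ x in box a b, (∑ j : Fin 4, pd j (fun y => f y t * flux F σ f j y t) x) = 0 := by
  have htI : t ∈ Icc 0 Tf := ⟨ht.1.le, ht.2.le⟩
  set G : Fin 4 → E4 → ℝ := fun j y => f y t * flux F σ f j y t with hGdef
  set Φ : Fin 4 → (Fin 4 → ℝ) → ℝ := fun j y => G j (eqE.symm y) with hΦdef
  set Φ' : Fin 4 → (Fin 4 → ℝ) → (Fin 4 → ℝ) →L[ℝ] ℝ :=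
    fun j y => (fderiv ℝ (G j) (eqE.symm y)).comp
      (eqE.symm.toContinuousLinearMap) with hΦ'def
  have hle : a ≤ b := fun i => (hab i).le
  have Hc : ∀ j : Fin 4, ContinuousOn (Φ j) (Icc a b) := by
    intro j
    exact ((contOn_u hreg htI).mul (contOn_flux hF hreg htI j)).comp
      eqE.symm.continuous.continuousOn (fun y hy => mem_S_of_Icc hab hy)
  have Hd : ∀ y ∈ (univ.pi fun i => Ioo (a i) (b i)) \ (∅ : Set (Fin 4 → ℝ)),
      ∀ j : Fin 4, HasFDerivAt (Φ j) (Φ' j y) y := by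
    intro y hy j
    have hyb : eqE.symm y ∈ box a b := mem_box_of_pi hy.1
    have h1 : HasFDerivAt (G j) (fderiv ℝ (G j) (eqE.symm y)) (eqE.symm y) :=
      (diff_G hF hreg htI (subset_closure hyb) j).hasFDerivAt
    exact h1.comp y eqE.symm.hasFDerivAt
  have Hieq : (fun y => ∑ i : Fin 4, (Φ' i y) (Pi.single i 1))
      = fun y => ∑ j : Fin 4, pd j (G j) (eqE.symm y) := rfl
  have Hi : IntegrableOn (fun y => ∑ i : Fin 4, (Φ' i y) (Pi.single i 1)) (Icc a b) := by
    rw [Hieq]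
    exact (((contOn_div_G hF hreg htI).comp eqE.symm.continuous.continuousOn
      (fun y hy => mem_S_of_Icc hab hy)).integrableOn_compact isCompact_Icc)
  have key := integral_divergence_of_hasFDerivAt_off_countable' a b hle Φ Φ'
    ∅ countable_empty Hc Hd Hi
  -- the faces vanish
  have hface : ∀ (i : Fin 4) (c : ℝ), (c = a i ∨ c = b i) →
      ∀ x ∈ Icc (a ∘ i.succAbove) (b ∘ i.succAbove), Φ i (i.insertNth c x) = 0 := by
    intro i c hc x hx
    have hci : c ∈ Icc (a i) (b i) := by
      rcases hc with rfl | rfl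
      · exact ⟨le_refl _, hle i⟩
      · exact ⟨hle i, le_refl _⟩
    have hmem : (i.insertNth c x) ∈ Icc a b := Fin.insertNth_mem_Icc.2 ⟨hci, hx⟩
    have hz : eqE.symm (i.insertNth c x) ∈ closure (box a b) := mem_S_of_Icc hab hmem
    have hzi : (eqE.symm (i.insertNth c x)) i = c := by
      have h := Fin.insertNth_apply_same (α := fun _ => ℝ) i c x
      exact h
    have hflux : flux F σ f i (eqE.symm (i.insertNth c x)) t = 0 := by
      apply hBC t ht i _ hz
      rw [hzi]
      rcases hc with rfl | rfl
      · exact Or.inl rfl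
      · exact Or.inr rfl
    show f _ t * flux F σ f i _ t = 0
    rw [hflux, mul_zero]
  have hRHS : ∑ i : Fin 4,
      ((∫ x in Icc (a ∘ i.succAbove) (b ∘ i.succAbove), Φ i (i.insertNth (b i) x)) -
        ∫ x in Icc (a ∘ i.succAbove) (b ∘ i.succAbove), Φ i (i.insertNth (a i) x)) = 0 := by
    apply Finset.sum_eq_zero
    intro i _
    have h1 : ∫ x in Icc (a ∘ i.succAbove) (b ∘ i.succAbove), Φ i (i.insertNth (b i) x) = 0 := by
      rw [setIntegral_congr_fun measurableSet_Icc
        (fun x hx => hface i (b i) (Or.inr rfl) x hx)]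
      exact integral_zero _ _
    have h2 : ∫ x in Icc (a ∘ i.succAbove) (b ∘ i.succAbove), Φ i (i.insertNth (a i) x) = 0 := by
      rw [setIntegral_congr_fun measurableSet_Icc
        (fun x hx => hface i (a i) (Or.inl rfl) x hx)]
      exact integral_zero _ _
    rw [h1, h2, sub_zero]
  rw [hRHS] at key
  rw [Hieq] at key
  -- now transfer
  rw [setIntegral_box_transfer]
  rw [← key]
  exact setIntegral_congr_set Measure.univ_pi_Ioo_ae_eq_Icc

end Div

section DUI

variable {a b : Fin 4 → ℝ} {Tf : ℝ} {f : E4 → ℝ → ℝ}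

lemma volume_box_lt_top (a b : Fin 4 → ℝ) : volume (box a b) < ⊤ :=
  lt_of_le_of_lt (measure_mono subset_closure) (volume_closure_box_lt_top a b)

lemma hasDerivAt_L2 (hab : ∀ i, a i < b i)
    (hreg : RegSol f (closure (box a b)) (Set.Icc 0 Tf))
    {t : ℝ} (ht : t ∈ Ioo 0 Tf) :
    HasDerivAt (fun s => ∫ x in box a b, (f x s) ^ 2)
      (∫ x in box a b, 2 * f x t * deriv (fun s => f x s) t) t := by
  have htI : t ∈ Icc 0 Tf := ⟨ht.1.le, ht.2.le⟩
  have hKS : IsCompact ((closure (box a b)) ×ˢ (Icc (0:ℝ) Tf)) :=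
    (isCompact_closure_box a b).prod isCompact_Icc
  have hφ : ContinuousOn (fun p : E4 × ℝ => 2 * f p.1 p.2 * deriv (fun s => f p.1 s) p.2)
      ((closure (box a b)) ×ˢ (Icc (0:ℝ) Tf)) :=
    (continuousOn_const.mul hreg.contF).mul hreg.contDT
  obtain ⟨M, hM⟩ := hKS.exists_bound_of_continuousOn hφ
  set ε : ℝ := min t (Tf - t) with hε
  have hεpos : 0 < ε := lt_min ht.1 (sub_pos.2 ht.2)
  have hball : Metric.ball t ε ⊆ Ioo 0 Tf := by
    rw [Real.ball_eq_Ioo]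
    apply Ioo_subset_Ioo
    · have : ε ≤ t := min_le_left _ _
      linarith
    · have : ε ≤ Tf - t := min_le_right _ _
      linarith
  have hmeas : MeasurableSet (box a b) := (isOpen_box a b).measurableSet
  have hballIcc : ∀ s ∈ Metric.ball t ε, s ∈ Icc 0 Tf := fun s hs =>
    ⟨(hball hs).1.le, (hball hs).2.le⟩
  have key := hasDerivAt_integral_of_dominated_loc_of_deriv_le (μ := volume.restrict (box a b))
    (F := fun s x => (f x s) ^ 2) (x₀ := t)
    (F' := fun s x => 2 * f x s * deriv (fun r => f x r) s)
    (bound := fun _ => M) (Metric.ball_mem_nhds t hεpos)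
    ?_ ?_ ?_ ?_ ?_ ?_
  · exact key.2
  · -- eventual measurability
    filter_upwards [Metric.ball_mem_nhds t hεpos] with s hs
    exact (((contOn_u hreg (hballIcc s hs)).pow 2).mono subset_closure).aestronglyMeasurable hmeas
  · -- integrability at t
    exact (((contOn_u hreg htI).pow 2).integrableOn_compact
      (isCompact_closure_box a b)).mono_set subset_closure
  · -- measurability of F' t
    have hc : ContinuousOn (fun x => 2 * f x t * deriv (fun r => f x r) t) (box a b) :=
      (sliceCont hφ htI).mono subset_closure
    exact hc.aestronglyMeasurable hmeas
  · -- bound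
    rw [ae_restrict_iff' hmeas]
    refine Eventually.of_forall fun x hx => fun s hs => ?_
    exact hM (x, s) ⟨subset_closure hx, hballIcc s hs⟩
  · -- bound integrable
    rw [integrable_const_iff]
    right
    constructor
    rw [Measure.restrict_apply_univ]
    exact volume_box_lt_top a b
  · -- differentiability
    rw [ae_restrict_iff' hmeas]
    refine Eventually.of_forall fun x hx => fun s hs => ?_
    have hd := (hreg.diffT x (subset_closure hx) s (hballIcc s hs)).hasDerivAt
    have h2 := hd.fun_pow 2
    exact h2.congr_deriv (by norm_num)
end DUI

section PW

variable {a b : Fin 4 → ℝ} {Tf : ℝ} {σ : Fin 4 → ℝ}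
  {F : E4 → ℝ → E4} {f : E4 → ℝ → ℝ}

lemma pointwise_id (hF : RegDrift F (closure (box a b)) (Set.Icc 0 Tf))
    (hreg : RegSol f (closure (box a b)) (Set.Icc 0 Tf))
    (hFP : ∀ x ∈ box a b, ∀ t ∈ Set.Ioo 0 Tf, FPEq F σ f x t)
    {x : E4} (hx : x ∈ box a b) {t : ℝ} (ht : t ∈ Ioo 0 Tf) :
    2 * f x t * deriv (fun s => f x s) t
      = 2 * (∑ j : Fin 4, pd j (fun y => f y t * flux F σ f j y t) x)
        + ∑ j : Fin 4, (2 * F x t j * f x t * pd j (fun y => f y t) x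
            - (σ j) ^ 2 * (pd j (fun y => f y t) x) ^ 2) := by
  have htI : t ∈ Icc 0 Tf := ⟨ht.1.le, ht.2.le⟩
  have hx' : x ∈ closure (box a b) := subset_closure hx
  have heq := hFP x hx t ht
  unfold FPEq at heq
  have h1 : ∑ j : Fin 4, pd j (fun y => flux F σ f j y t) x
      = ∑ j : Fin 4, ((σ j) ^ 2 / 2 * pd j (pd j (fun y => f y t)) x
          - pd j (fun y => F y t j * f y t) x) :=
    Finset.sum_congr rfl fun j _ => pd_flux_eq hF hreg htI hx' j
  have hderiv : deriv (fun s => f x s) t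
      = ∑ j : Fin 4, pd j (fun y => flux F σ f j y t) x := by
    rw [h1, Finset.sum_sub_distrib]
    have h2 : ∑ j : Fin 4, (σ j) ^ 2 / 2 * pd j (pd j (fun y => f y t)) x
        = (1 / 2) * ∑ j : Fin 4, (σ j) ^ 2 * pd j (pd j (fun y => f y t)) x := by
      rw [Finset.mul_sum]
      exact Finset.sum_congr rfl fun j _ => by ring
    rw [h2]
    linarith [heq]
  have hmul : 2 * f x t * deriv (fun s => f x s) t
      = ∑ j : Fin 4, 2 * f x t * pd j (fun y => flux F σ f j y t) x := by
    rw [hderiv, Finset.mul_sum]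
  rw [hmul, Finset.mul_sum, ← Finset.sum_add_distrib]
  apply Finset.sum_congr rfl
  intro j _
  have hg := pd_G_eq (σ := σ) hF hreg htI hx' j
  have hfl : flux F σ f j x t
      = (σ j) ^ 2 / 2 * pd j (fun y => f y t) x - F x t j * f x t := rfl
  rw [hg, hfl]
  ring

lemma pointwise_bound (hσ : ∀ j, 0 < σ j) {N : ℝ}
    {x : E4} {t : ℝ} (hFN : ‖F x t‖ ≤ N) :
    ∑ j : Fin 4, (2 * F x t j * f x t * pd j (fun y => f y t) x
        - (σ j) ^ 2 * (pd j (fun y => f y t) x) ^ 2)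
      ≤ (⨆ j : Fin 4, (σ j)⁻¹) ^ 2 * N ^ 2 * (f x t) ^ 2 := by
  set M : ℝ := ⨆ j : Fin 4, (σ j)⁻¹ with hM
  have hMj : ∀ j, (σ j)⁻¹ ≤ M := fun j =>
    le_ciSup (f := fun j => (σ j)⁻¹) (Set.Finite.bddAbove (finite_range _)) j
  have hMpos : 0 < M := lt_of_lt_of_le (inv_pos.2 (hσ 0)) (hMj 0)
  have step1 : ∑ j : Fin 4, (2 * F x t j * f x t * pd j (fun y => f y t) x
      - (σ j) ^ 2 * (pd j (fun y => f y t) x) ^ 2)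
      ≤ ∑ j : Fin 4, M ^ 2 * ((F x t j) ^ 2 * (f x t) ^ 2) := by
    apply Finset.sum_le_sum
    intro j _
    have hσj := hσ j
    have hMjj := hMj j
    set A := F x t j * f x t
    set B := pd j (fun y => f y t) x
    have key : 2 * A * B - (σ j) ^ 2 * B ^ 2 ≤ (σ j)⁻¹ ^ 2 * A ^ 2 := by
      have hs : σ j * (σ j)⁻¹ = 1 := mul_inv_cancel₀ (hσj.ne')
      have h3 : σ j * (σ j)⁻¹ * (A * B) = A * B := by rw [hs]; ring
      nlinarith [sq_nonneg (σ j * B - (σ j)⁻¹ * A), h3]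
    have key2 : (σ j)⁻¹ ^ 2 * A ^ 2 ≤ M ^ 2 * A ^ 2 := by
      have : (σ j)⁻¹ ^ 2 ≤ M ^ 2 := by
        apply pow_le_pow_left₀ (inv_pos.2 hσj).le hMjj
      nlinarith [sq_nonneg A]
    calc 2 * F x t j * f x t * B - (σ j) ^ 2 * B ^ 2
        = 2 * A * B - (σ j) ^ 2 * B ^ 2 := by ring
      _ ≤ (σ j)⁻¹ ^ 2 * A ^ 2 := key
      _ ≤ M ^ 2 * A ^ 2 := key2
      _ = M ^ 2 * ((F x t j) ^ 2 * (f x t) ^ 2) := by ring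
  have hnorm : ∑ j : Fin 4, (F x t j) ^ 2 = ‖F x t‖ ^ 2 := by
    rw [EuclideanSpace.norm_eq]
    rw [Real.sq_sqrt (Finset.sum_nonneg fun j _ => sq_nonneg _)]
    exact Finset.sum_congr rfl fun j _ => by rw [Real.norm_eq_abs, sq_abs]
  have step2 : ∑ j : Fin 4, M ^ 2 * ((F x t j) ^ 2 * (f x t) ^ 2)
      = M ^ 2 * (f x t) ^ 2 * ‖F x t‖ ^ 2 := by
    rw [← hnorm, Finset.mul_sum]
    exact Finset.sum_congr rfl fun j _ => by ring
  have step3 : M ^ 2 * (f x t) ^ 2 * ‖F x t‖ ^ 2 ≤ M ^ 2 * N ^ 2 * (f x t) ^ 2 := by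
    have hF2 : ‖F x t‖ ^ 2 ≤ N ^ 2 := by
      apply pow_le_pow_left₀ (norm_nonneg _) hFN
    nlinarith [sq_nonneg (M * f x t)]
  calc _ ≤ ∑ j : Fin 4, M ^ 2 * ((F x t j) ^ 2 * (f x t) ^ 2) := step1
    _ = M ^ 2 * (f x t) ^ 2 * ‖F x t‖ ^ 2 := step2
    _ ≤ M ^ 2 * N ^ 2 * (f x t) ^ 2 := step3

end PW



/-- **Differential inequality for the squared `L²` norm.**
If `f` is a classical solution of the Fokker–Planck equation on `Q = Ω × (0, T_f)` with no-flux
boundary conditions and the drift satisfies `|F(x,t)| ≤ N` on `Ω × (0, T_f)`, then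
`(d/dt) ‖f(·,t)‖²_{L²(Ω)} ≤ ‖σ⁻¹‖₂² N² ‖f(·,t)‖²_{L²(Ω)}` for all `t ∈ (0, T_f)`,
where `‖σ⁻¹‖₂ = max_j σ_j⁻¹`. -/
theorem fokkerPlanck_energy_differential_inequality
    (a b : Fin 4 → ℝ) (hab : ∀ i, a i < b i)
    (Tf : ℝ) (hTf : 0 < Tf)
    (σ : Fin 4 → ℝ) (hσ : ∀ j, 0 < σ j)
    (F : E4 → ℝ → E4) (hF : RegDrift F (closure (box a b)) (Set.Icc 0 Tf))
    (f : E4 → ℝ → ℝ) (hreg : RegSol f (closure (box a b)) (Set.Icc 0 Tf))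
    (hFP : ∀ x ∈ box a b, ∀ t ∈ Set.Ioo 0 Tf, FPEq F σ f x t)
    (hBC : NoFlux a b Tf F σ f)
    (N : ℝ) (hN : ∀ x ∈ box a b, ∀ t ∈ Set.Ioo 0 Tf, ‖F x t‖ ≤ N) :
    ∀ t ∈ Set.Ioo 0 Tf, ∃ d : ℝ,
      HasDerivAt (fun s => ∫ x in box a b, (f x s) ^ 2) d t ∧
      d ≤ (⨆ j : Fin 4, (σ j)⁻¹) ^ 2 * N ^ 2 * ∫ x in box a b, (f x t) ^ 2 := by
  intro t ht
  have htI : t ∈ Icc 0 Tf := ⟨ht.1.le, ht.2.le⟩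
  have hmeas : MeasurableSet (box a b) := (isOpen_box a b).measurableSet
  refine ⟨∫ x in box a b, 2 * f x t * deriv (fun s => f x s) t,
    hasDerivAt_L2 hab hreg ht, ?_⟩
  have ID : IntegrableOn
      (fun x => ∑ j : Fin 4, pd j (fun y => f y t * flux F σ f j y t) x) (box a b) :=
    ((contOn_div_G hF hreg htI).integrableOn_compact
      (isCompact_closure_box a b)).mono_set subset_closure
  have IR : IntegrableOn (fun x => ∑ j : Fin 4,
      (2 * F x t j * f x t * pd j (fun y => f y t) x
        - (σ j) ^ 2 * (pd j (fun y => f y t) x) ^ 2)) (box a b) := by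
    have hc : ContinuousOn (fun x => ∑ j : Fin 4,
        (2 * F x t j * f x t * pd j (fun y => f y t) x
          - (σ j) ^ 2 * (pd j (fun y => f y t) x) ^ 2)) (closure (box a b)) := by
      apply continuousOn_finset_sum
      intro j _
      exact (((continuousOn_const.mul (contOn_Fj hF htI j)).mul
        (contOn_u hreg htI)).mul (contOn_pdu hreg htI j)).sub
        (continuousOn_const.mul ((contOn_pdu hreg htI j).pow 2))
    exact (hc.integrableOn_compact (isCompact_closure_box a b)).mono_set subset_closure
  have If2 : IntegrableOn (fun x => (f x t) ^ 2) (box a b) :=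
    (((contOn_u hreg htI).pow 2).integrableOn_compact
      (isCompact_closure_box a b)).mono_set subset_closure
  have hrw : ∫ x in box a b, 2 * f x t * deriv (fun s => f x s) t
      = ∫ x in box a b,
        (2 * (∑ j : Fin 4, pd j (fun y => f y t * flux F σ f j y t) x)
          + ∑ j : Fin 4, (2 * F x t j * f x t * pd j (fun y => f y t) x
              - (σ j) ^ 2 * (pd j (fun y => f y t) x) ^ 2)) :=
    setIntegral_congr_fun hmeas (fun x hx => pointwise_id hF hreg hFP hx ht)
  rw [hrw, integral_add (ID.const_mul 2) IR, integral_const_mul _ _,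
    integral_div_G hab hF hreg hBC ht, mul_zero, zero_add]
  have hmono : ∫ x in box a b, (∑ j : Fin 4,
      (2 * F x t j * f x t * pd j (fun y => f y t) x
        - (σ j) ^ 2 * (pd j (fun y => f y t) x) ^ 2))
      ≤ ∫ x in box a b, (⨆ j : Fin 4, (σ j)⁻¹) ^ 2 * N ^ 2 * (f x t) ^ 2 := by
    apply setIntegral_mono_on IR (If2.const_mul _) hmeas
    intro x hx
    exact pointwise_bound hσ (hN x hx t ht)
  calc _ ≤ ∫ x in box a b, (⨆ j : Fin 4, (σ j)⁻¹) ^ 2 * N ^ 2 * (f x t) ^ 2 := hmono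
    _ = (⨆ j : Fin 4, (σ j)⁻¹) ^ 2 * N ^ 2 * ∫ x in box a b, (f x t) ^ 2 :=
      integral_const_mul _ _
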